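/- (Example 1: Cramér–Rao product and its minimum.) Let β > 0, Δ = {(x,y) ∈ ℝ² : x > 0}, and for integers n₁, n₂ ≥ 0 let ρ_{n₁,n₂} = u_{n₁,n₂}² where u_{n₁,n₂}(x,y) = √(2^{−2n₁−n₂−1}√β / (π (2n₁+1)! n₂!)) e^{−(√β/4)(x²+y²)} H_{2n₁+1}(β^{1/4} x/√2) H_{n₂}(β^{1/4} y/√2), with H_n the physicists' Hermite polynomial. Then the Cramér–Rao product satisfies F[ρ_{n₁,n₂}] · ⟨x²+y²⟩_{n₁,n₂} = 4(2n₁+n₂+2)², independently of β; in particular it is ≥ 16 for all n₁, n₂ ≥ 0, with equality exactly when n₁ = n₂ = 0, attained by the ground-state density ρ_{0,0}(x,y) = (β/π) x² e^{−(√β/2)(x²+y²)}. -/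

import Mathlib

open MeasureTheory Real

/-- The physicists' Hermite polynomial `H_n(t) = (-1)^n e^{t²} (d/dt)^n e^{-t²}`. -/
noncomputable def physHermite (n : ℕ) (t : ℝ) : ℝ :=
  (-1 : ℝ)^n * Real.exp (t^2) * iteratedDeriv n (fun s => Real.exp (-(s^2))) t

/-- The normalized eigenfunctions of the 2D harmonic oscillator on the half-plane
`x > 0` with Dirichlet boundary condition at `x = 0`. -/
noncomputable def uHalf (β : ℝ) (n₁ n₂ : ℕ) (p : ℝ × ℝ) : ℝ :=
  Real.sqrt ((2:ℝ) ^ (-2*(n₁:ℤ) - n₂ - 1) * Real.sqrt β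
      / (π * ((2*n₁+1).factorial : ℝ) * (n₂.factorial : ℝ)))
    * Real.exp (-(Real.sqrt β / 4) * (p.1^2 + p.2^2))
    * physHermite (2*n₁+1) (β ^ ((1:ℝ)/4) / Real.sqrt 2 * p.1)
    * physHermite n₂ (β ^ ((1:ℝ)/4) / Real.sqrt 2 * p.2)

/-- The Fisher information `F[u_{n₁,n₂}²] = 4∫_Δ |∇u_{n₁,n₂}|²` on the half-plane. -/
noncomputable def fisherHalf (β : ℝ) (n₁ n₂ : ℕ) : ℝ :=
  4 * ∫ p in {q : ℝ × ℝ | 0 < q.1},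
      ((deriv (fun s => uHalf β n₁ n₂ (s, p.2)) p.1)^2
        + (deriv (fun s => uHalf β n₁ n₂ (p.1, s)) p.2)^2)

/-- The variance `⟨x²+y²⟩_{n₁,n₂} = ∫_Δ (x²+y²) u_{n₁,n₂}²` on the half-plane. -/
noncomputable def varHalf (β : ℝ) (n₁ n₂ : ℕ) : ℝ :=
  ∫ p in {q : ℝ × ℝ | 0 < q.1}, (p.1^2 + p.2^2) * (uHalf β n₁ n₂ p)^2

namespace CramerRaoAux

open Polynomial Filter Set

/-! ### The physicists' Hermite polynomials, defined by recurrence -/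

noncomputable def Hp : ℕ → Polynomial ℝ
  | 0 => 1
  | n+1 => 2 * Polynomial.X * Hp n - Polynomial.derivative (Hp n)

@[simp] lemma Hp_zero : Hp 0 = 1 := rfl
lemma Hp_succ (n : ℕ) : Hp (n+1) = 2 * X * Hp n - derivative (Hp n) := rfl
@[simp] lemma Hp_one : Hp 1 = 2 * X := by simp [Hp_succ]

lemma Hp_derivative : ∀ n : ℕ, derivative (Hp (n+1)) = (2*n+2 : Polynomial ℝ) * Hp n := by
  intro n
  induction n with
  | zero => simp [Hp_succ]
  | succ n ih =>
      have e : Hp (n+2) = 2*X*Hp (n+1) - derivative (Hp (n+1)) := rfl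
      rw [e, derivative_sub, derivative_mul, ih]
      simp only [Hp_succ n, derivative_mul, derivative_ofNat, derivative_X, derivative_sub,
        derivative_add, derivative_natCast]
      push_cast
      ring

lemma X_mul_Hp (n : ℕ) :
    2 * (X * Hp n) = (2*n : Polynomial ℝ) * Hp (n-1) + Hp (n+1) := by
  cases n with
  | zero => simp [Hp_succ]
  | succ n =>
      rw [Hp_succ (n+1), Hp_derivative n]
      push_cast
      ring

lemma R_eq (n : ℕ) :
    2 * (derivative (Hp n) - X * Hp n) = (2*n : Polynomial ℝ) * Hp (n-1) - Hp (n+1) := by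
  cases n with
  | zero => simp [Hp_succ]
  | succ n =>
      have h := X_mul_Hp (n+1)
      rw [Hp_derivative n]
      push_cast at h ⊢
      linear_combination -h

lemma Hp_comp_neg : ∀ n : ℕ, (Hp n).comp (-X) = C ((-1:ℝ)^n) * Hp n := by
  intro n
  induction n with
  | zero => simp
  | succ n ih =>
      have hd : (derivative (Hp n)).comp (-X) = -derivative ((Hp n).comp (-X)) := by
        rw [derivative_comp]; simp
      have h2 : (2:Polynomial ℝ).comp (-X) = 2 := ofNat_comp 2
      rw [Hp_succ n, sub_comp, mul_comp, mul_comp, hd, ih, h2, derivative_C_mul]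
      simp only [X_comp, pow_succ, C_mul, C_neg, map_one]
      ring

lemma iteratedDeriv_gauss : ∀ n : ℕ, iteratedDeriv n (fun s : ℝ => Real.exp (-(s^2)))
    = fun t => (-1:ℝ)^n * (Hp n).eval t * Real.exp (-(t^2)) := by
  intro n
  induction n with
  | zero => funext t; simp [Hp]
  | succ n ih =>
      rw [iteratedDeriv_succ, ih]
      funext t
      have hg : HasDerivAt (fun t : ℝ => Real.exp (-(t^2))) (Real.exp (-(t^2)) * (-(2*t))) t := by
        simpa using (((hasDerivAt_pow 2 t).neg).exp)
      have h1 : HasDerivAt (fun t : ℝ => (-1:ℝ)^n * (Hp n).eval t * Real.exp (-(t^2)))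
          (((-1:ℝ)^n * (derivative (Hp n)).eval t) * Real.exp (-(t^2))
            + ((-1:ℝ)^n * (Hp n).eval t) * (Real.exp (-(t^2)) * (-(2*t)))) t :=
        (((Hp n).hasDerivAt t).const_mul ((-1:ℝ)^n)).mul hg
      rw [h1.deriv]
      show _ = (-1:ℝ)^(n+1) * (2 * X * Hp n - derivative (Hp n)).eval t * Real.exp (-(t^2))
      simp only [eval_sub, eval_mul, eval_ofNat, eval_X, pow_succ]
      ring

lemma physHermite_eq (n : ℕ) (t : ℝ) : physHermite n t = (Hp n).eval t := by
  unfold physHermite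
  rw [iteratedDeriv_gauss]
  have h1 : Real.exp (t^2) * Real.exp (-(t^2)) = 1 := by rw [← Real.exp_add]; simp
  have h2 : ((-1:ℝ)^n) * (-1:ℝ)^n = 1 := by
    rw [← sq, ← pow_mul, mul_comm, pow_mul, neg_one_sq, one_pow]
  calc (-1:ℝ)^n * Real.exp (t^2) * ((-1:ℝ)^n * (Hp n).eval t * Real.exp (-(t^2)))
      = ((-1:ℝ)^n * (-1:ℝ)^n) * (Real.exp (t^2) * Real.exp (-(t^2))) * (Hp n).eval t := by ring
  _ = (Hp n).eval t := by rw [h1, h2]; ring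

/-! ### Integrability and decay of polynomial × gaussian -/

lemma integrable_polyGauss (P : Polynomial ℝ) :
    Integrable fun x : ℝ => P.eval x * Real.exp (-(x^2)) := by
  have h : ∀ n : ℕ, Integrable fun x : ℝ => x^n * Real.exp (-(x^2)) := by
    intro n
    have hn : (-1:ℝ) < n := lt_of_lt_of_le neg_one_lt_zero (Nat.cast_nonneg n)
    have := integrable_rpow_mul_exp_neg_mul_sq (b := 1) one_pos hn
    simpa [Real.rpow_natCast, neg_one_mul] using this
  have he : (fun x : ℝ => P.eval x * Real.exp (-(x^2)))
      = fun x => ∑ i ∈ Finset.range (P.natDegree+1), P.coeff i * (x^i * Real.exp (-(x^2))) := by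
    funext x
    rw [eval_eq_sum_range, Finset.sum_mul]
    exact Finset.sum_congr rfl (fun i _ => by ring)
  rw [he]
  exact integrable_finset_sum _ (fun i _ => (h i).const_mul _)

lemma tendsto_polyGauss_atTop (P : Polynomial ℝ) :
    Tendsto (fun x : ℝ => P.eval x * Real.exp (-(x^2))) atTop (nhds 0) := by
  have h : ∀ n : ℕ, Tendsto (fun x : ℝ => x^n * Real.exp (-(x^2))) atTop (nhds 0) := by
    intro n
    have h1 := rpow_mul_exp_neg_mul_sq_isLittleO_exp_neg (b:=1) one_pos (n:ℝ)
    have h2 : Tendsto (fun x : ℝ => Real.exp (-(1/2) * x)) atTop (nhds 0) := by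
      apply Real.tendsto_exp_atBot.comp
      exact Tendsto.const_mul_atTop_of_neg (by norm_num) tendsto_id
    have h3 := h1.isBigO.trans_tendsto h2
    simpa [Real.rpow_natCast, neg_one_mul] using h3
  have he : (fun x : ℝ => P.eval x * Real.exp (-(x^2)))
      = fun x => ∑ i ∈ Finset.range (P.natDegree+1), P.coeff i * (x^i * Real.exp (-(x^2))) := by
    funext x
    rw [eval_eq_sum_range, Finset.sum_mul]
    exact Finset.sum_congr rfl (fun i _ => by ring)
  rw [he]
  have := tendsto_finset_sum (Finset.range (P.natDegree+1))
    (fun i (_ : i ∈ Finset.range (P.natDegree+1)) => (h i).const_mul (P.coeff i))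
  simpa using this

lemma tendsto_polyGauss_atBot (P : Polynomial ℝ) :
    Tendsto (fun x : ℝ => P.eval x * Real.exp (-(x^2))) atBot (nhds 0) := by
  have h := (tendsto_polyGauss_atTop (P.comp (-X))).comp tendsto_neg_atBot_atTop
  simpa [Function.comp_def, eval_comp, neg_sq] using h

lemma hasDerivAt_polyGauss (A : Polynomial ℝ) (x : ℝ) :
    HasDerivAt (fun t => A.eval t * Real.exp (-(t^2)))
      ((derivative A - 2*X*A).eval x * Real.exp (-(x^2))) x := by
  have hg : HasDerivAt (fun t : ℝ => Real.exp (-(t^2))) (Real.exp (-(x^2)) * (-(2*x))) x := by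
    simpa using (((hasDerivAt_pow 2 x).neg).exp)
  have h := (A.hasDerivAt x).mul hg
  refine h.congr_deriv ?_
  simp only [eval_sub, eval_mul, eval_ofNat, eval_X]
  ring

lemma integral_polyGauss_deriv (A : Polynomial ℝ) :
    ∫ x : ℝ, (derivative A - 2*X*A).eval x * Real.exp (-(x^2)) = 0 := by
  have hint := integrable_polyGauss (derivative A - 2*X*A)
  have h1 : ∫ x in Iic (0:ℝ), (derivative A - 2*X*A).eval x * Real.exp (-(x^2))
      = A.eval 0 * Real.exp (-((0:ℝ)^2)) - 0 :=
    integral_Iic_of_hasDerivAt_of_tendsto' (fun x _ => hasDerivAt_polyGauss A x)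
      hint.integrableOn (tendsto_polyGauss_atBot A)
  have h2 : ∫ x in Ioi (0:ℝ), (derivative A - 2*X*A).eval x * Real.exp (-(x^2))
      = 0 - A.eval 0 * Real.exp (-((0:ℝ)^2)) :=
    integral_Ioi_of_hasDerivAt_of_tendsto' (fun x _ => hasDerivAt_polyGauss A x)
      hint.integrableOn (tendsto_polyGauss_atTop A)
  have h3 := intervalIntegral.integral_Iic_add_Ioi (b := (0:ℝ))
    hint.integrableOn hint.integrableOn
  rw [h1, h2] at h3
  linarith [h3]

/-! ### Orthogonality of the Hermite polynomials against the gaussian weight -/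

noncomputable def Iq (P : Polynomial ℝ) : ℝ := ∫ x : ℝ, P.eval x * Real.exp (-(x^2))

lemma Iq_add (P Q : Polynomial ℝ) : Iq (P + Q) = Iq P + Iq Q := by
  unfold Iq
  rw [← integral_add (integrable_polyGauss P) (integrable_polyGauss Q)]
  congr 1; funext x; simp only [eval_add]; ring

lemma Iq_sub (P Q : Polynomial ℝ) : Iq (P - Q) = Iq P - Iq Q := by
  unfold Iq
  rw [← integral_sub (integrable_polyGauss P) (integrable_polyGauss Q)]
  congr 1; funext x; simp only [eval_sub]; ring

lemma Iq_Cmul (c : ℝ) (P : Polynomial ℝ) : Iq (C c * P) = c * Iq P := by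
  unfold Iq
  rw [← integral_const_mul]
  congr 1; funext x; simp only [eval_mul, eval_C]; ring

lemma Iq_zero : Iq 0 = 0 := by unfold Iq; simp

lemma Iq_step (a b : ℕ) : Iq (Hp (a+1) * Hp b) = Iq (Hp a * derivative (Hp b)) := by
  have key := integral_polyGauss_deriv (Hp a * Hp b)
  have hpoly : Hp a * derivative (Hp b) - Hp (a+1) * Hp b
      = derivative (Hp a * Hp b) - 2*X*(Hp a * Hp b) := by
    rw [derivative_mul, Hp_succ]; ring
  have h0 : Iq (Hp a * derivative (Hp b) - Hp (a+1) * Hp b) = 0 := by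
    rw [hpoly]; exact key
  rw [Iq_sub] at h0
  linarith

lemma Iq_Hp_mul_zero : ∀ b a : ℕ, b < a → Iq (Hp a * Hp b) = 0 := by
  intro b
  induction b with
  | zero =>
      rintro ⟨_, rfl⟩ h
      · omega
      rw [Iq_step, Hp_zero]
      simpa using Iq_zero
  | succ b ih =>
      rintro ⟨_, rfl⟩ h
      · omega
      next a =>
      have hC : ((2*b+2 : Polynomial ℝ)) = C (2*(b:ℝ)+2) := by push_cast; simp [map_ofNat]
      rw [Iq_step, Hp_derivative b, show Hp a * ((2*b+2 : Polynomial ℝ) * Hp b)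
        = C (2*(b:ℝ)+2) * (Hp a * Hp b) by rw [hC]; ring, Iq_Cmul,
        ih a (by omega), mul_zero]

lemma Iq_Hp_mul_ne {a b : ℕ} (h : a ≠ b) : Iq (Hp a * Hp b) = 0 := by
  rcases h.lt_or_gt with h' | h'
  · rw [mul_comm]; exact Iq_Hp_mul_zero a b h'
  · exact Iq_Hp_mul_zero b a h'

noncomputable def Nv (m : ℕ) : ℝ := 2^m * m.factorial * Real.sqrt π

lemma Iq_Hp_self : ∀ m : ℕ, Iq (Hp m * Hp m) = Nv m := by
  intro m
  induction m with
  | zero =>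
      rw [Hp_zero, Nv]
      unfold Iq
      simpa [Real.sqrt_div_self', neg_one_mul] using integral_gaussian 1
  | succ m ih =>
      have hC : ((2*m+2 : Polynomial ℝ)) = C (2*(m:ℝ)+2) := by push_cast; simp [map_ofNat]
      rw [Iq_step, Hp_derivative m, show Hp m * ((2*m+2 : Polynomial ℝ) * Hp m)
        = C (2*(m:ℝ)+2) * (Hp m * Hp m) by rw [hC]; ring, Iq_Cmul, ih]
      simp only [Nv, Nat.factorial_succ]
      push_cast
      ring

lemma Iq_quad (u v : ℝ) (i j : ℕ) (hij : i ≠ j) :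
    Iq ((C u * Hp i + C v * Hp j)^2) = u^2 * Nv i + v^2 * Nv j := by
  have e : (C u * Hp i + C v * Hp j)^2
      = C (u^2) * (Hp i * Hp i) + (C (u*v) * (Hp i * Hp j) + C (u*v) * (Hp j * Hp i))
        + C (v^2) * (Hp j * Hp j) := by
    simp only [map_mul, map_pow]
    ring
  rw [e, Iq_add, Iq_add, Iq_add, Iq_Cmul, Iq_Cmul, Iq_Cmul, Iq_Cmul,
    Iq_Hp_self, Iq_Hp_self, Iq_Hp_mul_ne hij, Iq_Hp_mul_ne hij.symm]
  ring

lemma Nv_pos (m : ℕ) : 0 < Nv m := by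
  have h1 := Real.sqrt_pos.2 Real.pi_pos
  have h2 : (0:ℝ) < m.factorial := by exact_mod_cast Nat.factorial_pos m
  have h3 : (0:ℝ) < 2^m := by positivity
  exact mul_pos (mul_pos h3 h2) h1

lemma Nv_aux (m : ℕ) : (2*(m:ℝ))^2 * Nv (m-1) + Nv (m+1) = 4*((m:ℝ)+1/2) * Nv m := by
  cases m with
  | zero => norm_num [Nv]
  | succ k =>
      simp only [Nat.add_sub_cancel, Nv, Nat.factorial_succ]
      push_cast
      ring

lemma Iq_Xsq (m : ℕ) : Iq ((X * Hp m)^2) = ((m:ℝ)+1/2) * Nv m := by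
  have hC : ((2*m : Polynomial ℝ)) = C (2*(m:ℝ)) := by push_cast; simp [map_ofNat]
  have h4 : (4:ℝ) * Iq ((X*Hp m)^2) = Iq ((C (2*(m:ℝ)) * Hp (m-1) + C 1 * Hp (m+1))^2) := by
    rw [← Iq_Cmul]
    congr 1
    have h2 : (2*(X*Hp m))^2 = (C (2*(m:ℝ)) * Hp (m-1) + C 1 * Hp (m+1))^2 := by
      rw [X_mul_Hp m, hC, map_one, one_mul]
    calc C (4:ℝ) * (X*Hp m)^2 = (2*(X*Hp m))^2 := by
          simp only [map_ofNat]; ring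
    _ = _ := h2
  rw [Iq_quad _ _ _ _ (by omega)] at h4
  have h5 := Nv_aux m
  nlinarith [h4, h5]

lemma Iq_Rsq (m : ℕ) : Iq ((derivative (Hp m) - X * Hp m)^2) = ((m:ℝ)+1/2) * Nv m := by
  have hC : ((2*m : Polynomial ℝ)) = C (2*(m:ℝ)) := by push_cast; simp [map_ofNat]
  have h4 : (4:ℝ) * Iq ((derivative (Hp m) - X * Hp m)^2)
      = Iq ((C (2*(m:ℝ)) * Hp (m-1) + C (-1) * Hp (m+1))^2) := by
    rw [← Iq_Cmul]
    congr 1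
    have h2 : (2*(derivative (Hp m) - X * Hp m))^2
        = (C (2*(m:ℝ)) * Hp (m-1) + C (-1) * Hp (m+1))^2 := by
      rw [R_eq m, hC, map_neg, map_one]; ring
    calc C (4:ℝ) * (derivative (Hp m) - X * Hp m)^2
          = (2*(derivative (Hp m) - X * Hp m))^2 := by
          simp only [map_ofNat]; ring
    _ = _ := h2
  rw [Iq_quad _ _ _ _ (by omega)] at h4
  have h5 := Nv_aux m
  nlinarith [h4, h5]

lemma Iq_sq' (m : ℕ) : Iq ((Hp m)^2) = Nv m := by rw [sq]; exact Iq_Hp_self m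

/-! ### Parity -/

lemma neg_one_pow_sq (m : ℕ) : (((-1:ℝ)^m))^2 = 1 := by
  rw [← pow_mul, mul_comm, pow_mul, neg_one_sq, one_pow]

lemma sqHp_comp_neg (m : ℕ) : ((Hp m)^2).comp (-X) = (Hp m)^2 := by
  rw [pow_comp, Hp_comp_neg, mul_pow, ← map_pow, neg_one_pow_sq, map_one, one_mul]

lemma sqXHp_comp_neg (m : ℕ) : ((X * Hp m)^2).comp (-X) = (X * Hp m)^2 := by
  rw [pow_comp, mul_comp, X_comp, Hp_comp_neg, mul_pow, mul_pow, ← map_pow,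
    neg_one_pow_sq, map_one, one_mul]
  ring

lemma sqR_comp_neg (m : ℕ) : ((derivative (Hp m) - X * Hp m)^2).comp (-X)
    = (derivative (Hp m) - X * Hp m)^2 := by
  have hd : (derivative (Hp m)).comp (-X) = -derivative ((Hp m).comp (-X)) := by
    rw [derivative_comp]; simp
  rw [pow_comp, sub_comp, mul_comp, X_comp, hd, Hp_comp_neg, derivative_C_mul]
  have e : -(C ((-1:ℝ)^m) * derivative (Hp m)) - -X * (C ((-1:ℝ)^m) * Hp m)
      = C ((-1:ℝ)^m) * -(derivative (Hp m) - X * Hp m) := by ring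
  rw [e, mul_pow, ← map_pow, neg_one_pow_sq, map_one, one_mul, neg_sq]

/-! ### Scaled integrals -/

lemma integral_scaled {a : ℝ} (ha : 0 < a) (Q : Polynomial ℝ) :
    ∫ x : ℝ, Q.eval (a*x) * Real.exp (-((a*x)^2)) = a⁻¹ * Iq Q := by
  have h := MeasureTheory.Measure.integral_comp_mul_left
    (fun y => Q.eval y * Real.exp (-(y^2))) a
  rw [abs_of_pos (inv_pos.2 ha), smul_eq_mul] at h
  exact h

lemma integrable_scaled {a : ℝ} (ha : 0 < a) (Q : Polynomial ℝ) :
    Integrable fun x : ℝ => Q.eval (a*x) * Real.exp (-((a*x)^2)) :=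
  (MeasureTheory.integrable_comp_mul_left_iff
    (fun y => Q.eval y * Real.exp (-(y^2))) ha.ne').2 (integrable_polyGauss Q)

lemma eval_neg_of_comp_neg {P : Polynomial ℝ} (h : P.comp (-X) = P) (t : ℝ) :
    P.eval (-t) = P.eval t := by
  conv_rhs => rw [← h]
  rw [eval_comp]; simp

lemma integral_scaled_Ioi {a : ℝ} (ha : 0 < a) (Q : Polynomial ℝ) (hQ : Q.comp (-X) = Q) :
    ∫ x in Ioi (0:ℝ), Q.eval (a*x) * Real.exp (-((a*x)^2)) = (2*a)⁻¹ * Iq Q := by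
  set f : ℝ → ℝ := fun x => Q.eval (a*x) * Real.exp (-((a*x)^2)) with hf
  have hint := integrable_scaled ha Q
  have hev : ∀ x, f (-x) = f x := by
    intro x
    simp only [hf]
    rw [show a * -x = -(a*x) from by ring, eval_neg_of_comp_neg hQ, neg_sq]
  have h1 : ∫ x in Iic (0:ℝ), f x = ∫ x in Ioi (0:ℝ), f x := by
    have h := integral_comp_neg_Iic (0:ℝ) f
    rw [neg_zero] at h
    rw [← h]
    exact setIntegral_congr_fun measurableSet_Iic (fun x _ => (hev x).symm)
  have h2 := intervalIntegral.integral_Iic_add_Ioi (b := (0:ℝ))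
    hint.integrableOn hint.integrableOn
  have h3 : ∫ x : ℝ, f x = a⁻¹ * Iq Q := integral_scaled ha Q
  rw [h1, h3] at h2
  have : (2:ℝ) * ((2*a)⁻¹ * Iq Q) = a⁻¹ * Iq Q := by
    field_simp
  linarith

/-! ### Fubini on the half plane -/

lemma halfplane_eq_prod : {q : ℝ × ℝ | 0 < q.1} = (Ioi (0:ℝ)) ×ˢ (univ : Set ℝ) := by
  ext p
  simp [Set.mem_prod]

lemma setIntegral_halfplane_mul {f g : ℝ → ℝ} :
    ∫ p in {q : ℝ × ℝ | 0 < q.1}, f p.1 * g p.2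
      = (∫ x in Ioi (0:ℝ), f x) * ∫ y : ℝ, g y := by
  rw [halfplane_eq_prod, Measure.volume_eq_prod ℝ ℝ, setIntegral_prod_mul, Measure.restrict_univ]

lemma integrableOn_halfplane_mul {f g : ℝ → ℝ} (hf : IntegrableOn f (Ioi 0))
    (hg : Integrable g) :
    IntegrableOn (fun p : ℝ × ℝ => f p.1 * g p.2) {q : ℝ × ℝ | 0 < q.1} := by
  rw [halfplane_eq_prod, IntegrableOn, Measure.volume_eq_prod ℝ ℝ, ← Measure.prod_restrict]
  exact hf.mul_prod hg.integrableOn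


/-! ### The scale and normalization constants -/

noncomputable def aa (β : ℝ) : ℝ := β ^ ((1:ℝ)/4) / Real.sqrt 2

lemma aa_pos {β : ℝ} (hβ : 0 < β) : 0 < aa β :=
  div_pos (Real.rpow_pos_of_pos hβ _) (Real.sqrt_pos.2 two_pos)

lemma aa_sq {β : ℝ} (hβ : 0 < β) : (aa β)^2 = Real.sqrt β / 2 := by
  unfold aa
  rw [div_pow, Real.sq_sqrt (by norm_num : (0:ℝ) ≤ 2),
    ← Real.rpow_natCast (β ^ ((1:ℝ)/4)) 2, ← Real.rpow_mul hβ.le]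
  norm_num
  rw [← Real.sqrt_eq_rpow]

noncomputable def cst (β : ℝ) (n₁ n₂ : ℕ) : ℝ :=
  (2:ℝ) ^ (-2*(n₁:ℤ) - n₂ - 1) * Real.sqrt β
    / (π * ((2*n₁+1).factorial : ℝ) * (n₂.factorial : ℝ))

lemma cst_pos {β : ℝ} (hβ : 0 < β) (n₁ n₂ : ℕ) : 0 < cst β n₁ n₂ := by
  unfold cst
  have h1 : (0:ℝ) < (2:ℝ) ^ (-2*(n₁:ℤ) - n₂ - 1) := by positivity
  have h2 := Real.sqrt_pos.2 hβ
  have h3 : (0:ℝ) < ((2*n₁+1).factorial : ℝ) := by exact_mod_cast Nat.factorial_pos _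
  have h4 : (0:ℝ) < (n₂.factorial : ℝ) := by exact_mod_cast Nat.factorial_pos _
  have h5 := Real.pi_pos
  positivity

lemma cst_mul_Nv {β : ℝ} (hβ : 0 < β) (n₁ n₂ : ℕ) :
    cst β n₁ n₂ * (Nv (2*n₁+1) * Nv n₂) = 2 * (aa β)^2 := by
  unfold cst Nv
  rw [aa_sq hβ]
  have hpi : Real.sqrt π * Real.sqrt π = π := Real.mul_self_sqrt Real.pi_pos.le
  have hz : (2:ℝ) ^ (-2*(n₁:ℤ) - n₂ - 1) * ((2:ℝ)^(2*n₁+1) * (2:ℝ)^n₂) = 1 := by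
    have h1 : ((2:ℝ))^(2*n₁+1) * (2:ℝ)^n₂ = (2:ℝ)^((2*n₁+1+n₂ : ℕ):ℤ) := by
      rw [zpow_natCast, pow_add, pow_add]
      ring
    rw [h1, ← zpow_add₀ (two_ne_zero : (2:ℝ) ≠ 0)]
    rw [show (-2*(n₁:ℤ) - n₂ - 1) + ((2*n₁+1+n₂ : ℕ):ℤ) = 0 by push_cast; ring]
    exact zpow_zero 2
  have h3 : ((2*n₁+1).factorial : ℝ) ≠ 0 := by
    exact_mod_cast (Nat.factorial_pos _).ne'
  have h4 : ((n₂.factorial : ℕ) : ℝ) ≠ 0 := by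
    exact_mod_cast (Nat.factorial_pos _).ne'
  have h5 : π ≠ 0 := Real.pi_pos.ne'
  calc (2:ℝ) ^ (-2*(n₁:ℤ) - n₂ - 1) * Real.sqrt β
        / (π * ((2*n₁+1).factorial : ℝ) * (n₂.factorial : ℝ))
        * ((2:ℝ)^(2*n₁+1) * ((2*n₁+1).factorial : ℝ) * Real.sqrt π
            * ((2:ℝ)^n₂ * (n₂.factorial : ℝ) * Real.sqrt π))
      = ((2:ℝ) ^ (-2*(n₁:ℤ) - n₂ - 1) * ((2:ℝ)^(2*n₁+1) * (2:ℝ)^n₂)) * (Real.sqrt π * Real.sqrt π)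
        * (((2*n₁+1).factorial : ℝ) * (n₂.factorial : ℝ) * Real.sqrt β
          / (π * ((2*n₁+1).factorial : ℝ) * (n₂.factorial : ℝ))) := by ring
    _ = Real.sqrt β := by rw [hz, hpi]; field_simp
    _ = 2 * (Real.sqrt β / 2) := by ring

/-! ### The one-dimensional factors -/

noncomputable def wf (β : ℝ) (k : ℕ) (x : ℝ) : ℝ :=
  Real.exp (-(Real.sqrt β / 4) * x^2) * (Hp k).eval (aa β * x)

lemma exp_sq {β : ℝ} (hβ : 0 < β) (x : ℝ) :
    Real.exp (-(Real.sqrt β/4) * x^2) * Real.exp (-(Real.sqrt β/4) * x^2)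
      = Real.exp (-((aa β * x)^2)) := by
  rw [← Real.exp_add]
  congr 1
  rw [mul_pow, aa_sq hβ]
  ring

lemma wf_sq {β : ℝ} (hβ : 0 < β) (k : ℕ) (x : ℝ) :
    (wf β k x)^2 = ((Hp k)^2).eval (aa β * x) * Real.exp (-((aa β * x)^2)) := by
  unfold wf
  rw [mul_pow, sq (Real.exp _), exp_sq hβ, eval_pow]
  ring

lemma uHalf_eq {β : ℝ} (n₁ n₂ : ℕ) (x y : ℝ) :
    uHalf β n₁ n₂ (x, y)
      = Real.sqrt (cst β n₁ n₂) * wf β (2*n₁+1) x * wf β n₂ y := by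
  unfold uHalf wf cst aa
  rw [physHermite_eq, physHermite_eq,
    show -(Real.sqrt β/4)*(x^2+y^2) = -(Real.sqrt β/4)*x^2 + -(Real.sqrt β/4)*y^2 by ring,
    Real.exp_add]
  ring

lemma wf_hasDerivAt {β : ℝ} (hβ : 0 < β) (k : ℕ) (x : ℝ) :
    HasDerivAt (wf β k)
      (aa β * (Real.exp (-(Real.sqrt β/4) * x^2)
        * (derivative (Hp k) - X * Hp k).eval (aa β * x))) x := by
  have hexp : HasDerivAt (fun x : ℝ => Real.exp (-(Real.sqrt β/4) * x^2))
      (Real.exp (-(Real.sqrt β/4) * x^2) * (-(Real.sqrt β/4) * (2*x))) x := by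
    have h0 : HasDerivAt (fun x : ℝ => -(Real.sqrt β/4) * x^2)
        (-(Real.sqrt β/4) * (2*x)) x := by
      simpa using (hasDerivAt_pow 2 x).const_mul (-(Real.sqrt β/4))
    exact h0.exp
  have hlin : HasDerivAt (fun x : ℝ => aa β * x) (aa β) x := by
    simpa using (hasDerivAt_id x).const_mul (aa β)
  have hpoly : HasDerivAt (fun x : ℝ => (Hp k).eval (aa β * x))
      ((derivative (Hp k)).eval (aa β * x) * aa β) x :=
    HasDerivAt.comp x ((Hp k).hasDerivAt (aa β * x)) hlin
  have h := hexp.mul hpoly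
  refine h.congr_deriv ?_
  have h2 : -(Real.sqrt β/4) * (2*x) = -((aa β)^2 * x) := by rw [aa_sq hβ]; ring
  simp only [eval_sub, eval_mul, eval_X]
  rw [h2]
  ring

lemma deriv_uHalf_x {β : ℝ} (hβ : 0 < β) (n₁ n₂ : ℕ) (x y : ℝ) :
    deriv (fun s => uHalf β n₁ n₂ (s, y)) x
      = Real.sqrt (cst β n₁ n₂) * wf β n₂ y
        * (aa β * (Real.exp (-(Real.sqrt β/4) * x^2)
            * (derivative (Hp (2*n₁+1)) - X * Hp (2*n₁+1)).eval (aa β * x))) := by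
  have he : (fun s => uHalf β n₁ n₂ (s, y))
      = fun s => (Real.sqrt (cst β n₁ n₂) * wf β n₂ y) * wf β (2*n₁+1) s := by
    funext s; rw [uHalf_eq]; ring
  rw [he]
  rw [((wf_hasDerivAt hβ (2*n₁+1) x).const_mul
    (Real.sqrt (cst β n₁ n₂) * wf β n₂ y)).deriv]

lemma deriv_uHalf_y {β : ℝ} (hβ : 0 < β) (n₁ n₂ : ℕ) (x y : ℝ) :
    deriv (fun s => uHalf β n₁ n₂ (x, s)) y
      = Real.sqrt (cst β n₁ n₂) * wf β (2*n₁+1) x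
        * (aa β * (Real.exp (-(Real.sqrt β/4) * y^2)
            * (derivative (Hp n₂) - X * Hp n₂).eval (aa β * y))) := by
  have he : (fun s => uHalf β n₁ n₂ (x, s))
      = fun s => (Real.sqrt (cst β n₁ n₂) * wf β (2*n₁+1) x) * wf β n₂ s := by
    funext s; rw [uHalf_eq]
  rw [he]
  rw [((wf_hasDerivAt hβ n₂ y).const_mul
    (Real.sqrt (cst β n₁ n₂) * wf β (2*n₁+1) x)).deriv]

/-! ### Canonical scaled gaussian integrals -/

noncomputable def Gq (β : ℝ) (Q : Polynomial ℝ) (x : ℝ) : ℝ :=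
  Q.eval (aa β * x) * Real.exp (-((aa β * x)^2))

lemma Gq_integrable {β : ℝ} (hβ : 0 < β) (Q : Polynomial ℝ) :
    Integrable (Gq β Q) := integrable_scaled (aa_pos hβ) Q

lemma Gq_integral {β : ℝ} (hβ : 0 < β) (Q : Polynomial ℝ) :
    ∫ x : ℝ, Gq β Q x = (aa β)⁻¹ * Iq Q := integral_scaled (aa_pos hβ) Q

lemma Gq_integral_Ioi {β : ℝ} (hβ : 0 < β) (Q : Polynomial ℝ) (hQ : Q.comp (-X) = Q) :
    ∫ x in Ioi (0:ℝ), Gq β Q x = (2 * aa β)⁻¹ * Iq Q :=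
  integral_scaled_Ioi (aa_pos hβ) Q hQ

/-! ### The variance integral -/

lemma measurableS : MeasurableSet {q : ℝ × ℝ | 0 < q.1} :=
  (isOpen_lt continuous_const continuous_fst).measurableSet

lemma var_eq {β : ℝ} (hβ : 0 < β) (n₁ n₂ : ℕ) :
    varHalf β n₁ n₂ = (((aa β)^2)⁻¹) * (2*(n₁:ℝ) + n₂ + 2) := by
  have ha := aa_pos hβ
  have hc := cst_pos hβ n₁ n₂
  have hpt : ∀ p : ℝ × ℝ, (p.1^2 + p.2^2) * (uHalf β n₁ n₂ p)^2
      = (fun x => cst β n₁ n₂ * ((aa β)^2)⁻¹ * Gq β ((X * Hp (2*n₁+1))^2) x) p.1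
          * (fun y => Gq β ((Hp n₂)^2) y) p.2
        + (fun x => cst β n₁ n₂ * Gq β ((Hp (2*n₁+1))^2) x) p.1
          * (fun y => ((aa β)^2)⁻¹ * Gq β ((X * Hp n₂)^2) y) p.2 := by
    rintro ⟨x, y⟩
    simp only
    rw [uHalf_eq]
    have hsq : (Real.sqrt (cst β n₁ n₂) * wf β (2*n₁+1) x * wf β n₂ y)^2
        = cst β n₁ n₂ * (wf β (2*n₁+1) x)^2 * (wf β n₂ y)^2 := by
      rw [mul_pow, mul_pow, Real.sq_sqrt hc.le]
    rw [hsq, wf_sq hβ, wf_sq hβ]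
    have hX : ∀ (k : ℕ) (t : ℝ), Gq β ((X * Hp k)^2) t
        = (aa β)^2 * t^2 * Gq β ((Hp k)^2) t := by
      intro k t
      unfold Gq
      rw [eval_pow, eval_pow, eval_mul, eval_X, mul_pow]
      ring
    rw [hX, hX]
    unfold Gq
    field_simp
  unfold varHalf
  rw [setIntegral_congr_fun measurableS (fun p _ => hpt p)]
  rw [integral_add
    (integrableOn_halfplane_mul (((Gq_integrable hβ _).const_mul _).integrableOn)
      (Gq_integrable hβ _))
    (integrableOn_halfplane_mul (((Gq_integrable hβ _).const_mul _).integrableOn)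
      ((Gq_integrable hβ _).const_mul _))]
  rw [setIntegral_halfplane_mul
      (f := fun x => cst β n₁ n₂ * ((aa β)^2)⁻¹ * Gq β ((X * Hp (2*n₁+1))^2) x)
      (g := fun y => Gq β ((Hp n₂)^2) y),
    setIntegral_halfplane_mul
      (f := fun x => cst β n₁ n₂ * Gq β ((Hp (2*n₁+1))^2) x)
      (g := fun y => ((aa β)^2)⁻¹ * Gq β ((X * Hp n₂)^2) y)]
  rw [integral_const_mul, integral_const_mul, integral_const_mul,
    Gq_integral_Ioi hβ _ (sqXHp_comp_neg _), Gq_integral_Ioi hβ _ (sqHp_comp_neg _),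
    Gq_integral hβ, Gq_integral hβ, Iq_Xsq, Iq_Xsq, Iq_sq', Iq_sq']
  have hckey := cst_mul_Nv hβ n₁ n₂
  have hN1 := (Nv_pos (2*n₁+1)).ne'
  have hN2 := (Nv_pos n₂).ne'
  have hc' : cst β n₁ n₂ = 2*(aa β)^2 / (Nv (2*n₁+1) * Nv n₂) := by
    rw [eq_div_iff (mul_ne_zero hN1 hN2)]
    exact hckey
  rw [hc']
  have ha' : aa β ≠ 0 := ha.ne'
  field_simp
  push_cast
  ring

/-! ### The Fisher information integral -/

lemma fisher_eq {β : ℝ} (hβ : 0 < β) (n₁ n₂ : ℕ) :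
    fisherHalf β n₁ n₂ = 4 * (aa β)^2 * (2*(n₁:ℝ) + n₂ + 2) := by
  have ha := aa_pos hβ
  have hc := cst_pos hβ n₁ n₂
  have hpt : ∀ p : ℝ × ℝ,
      (deriv (fun s => uHalf β n₁ n₂ (s, p.2)) p.1)^2
        + (deriv (fun s => uHalf β n₁ n₂ (p.1, s)) p.2)^2
      = (fun x => cst β n₁ n₂ * (aa β)^2
            * Gq β ((derivative (Hp (2*n₁+1)) - X * Hp (2*n₁+1))^2) x) p.1
          * (fun y => Gq β ((Hp n₂)^2) y) p.2
        + (fun x => cst β n₁ n₂ * (aa β)^2 * Gq β ((Hp (2*n₁+1))^2) x) p.1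
          * (fun y => Gq β ((derivative (Hp n₂) - X * Hp n₂)^2) y) p.2 := by
    rintro ⟨x, y⟩
    simp only
    rw [deriv_uHalf_x hβ n₁ n₂ x y, deriv_uHalf_y hβ n₁ n₂ x y]
    have hsq2 : ∀ w z : ℝ, (Real.sqrt (cst β n₁ n₂) * w * z)^2
        = cst β n₁ n₂ * w^2 * z^2 := by
      intro w z
      rw [mul_pow, mul_pow, Real.sq_sqrt hc.le]
    rw [hsq2, hsq2, wf_sq hβ, wf_sq hβ]
    have hz2 : ∀ (k : ℕ) (t : ℝ),
        (aa β * (Real.exp (-(Real.sqrt β/4) * t^2)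
          * (derivative (Hp k) - X * Hp k).eval (aa β * t)))^2
        = (aa β)^2 * Gq β ((derivative (Hp k) - X * Hp k)^2) t := by
      intro k t
      unfold Gq
      rw [mul_pow, mul_pow, sq (Real.exp _), exp_sq hβ, eval_pow]
      ring
    rw [hz2, hz2]
    unfold Gq
    ring
  unfold fisherHalf
  rw [setIntegral_congr_fun measurableS (fun p _ => hpt p)]
  rw [integral_add
    (integrableOn_halfplane_mul (((Gq_integrable hβ _).const_mul _).integrableOn)
      (Gq_integrable hβ _))
    (integrableOn_halfplane_mul (((Gq_integrable hβ _).const_mul _).integrableOn)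
      (Gq_integrable hβ _))]
  rw [setIntegral_halfplane_mul
      (f := fun x => cst β n₁ n₂ * (aa β)^2
        * Gq β ((derivative (Hp (2*n₁+1)) - X * Hp (2*n₁+1))^2) x)
      (g := fun y => Gq β ((Hp n₂)^2) y),
    setIntegral_halfplane_mul
      (f := fun x => cst β n₁ n₂ * (aa β)^2 * Gq β ((Hp (2*n₁+1))^2) x)
      (g := fun y => Gq β ((derivative (Hp n₂) - X * Hp n₂)^2) y)]
  rw [integral_const_mul, integral_const_mul,
    Gq_integral_Ioi hβ _ (sqR_comp_neg _), Gq_integral_Ioi hβ _ (sqHp_comp_neg _),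
    Gq_integral hβ, Gq_integral hβ, Iq_Rsq, Iq_Rsq, Iq_sq', Iq_sq']
  have hN1 := (Nv_pos (2*n₁+1)).ne'
  have hN2 := (Nv_pos n₂).ne'
  have hc' : cst β n₁ n₂ = 2*(aa β)^2 / (Nv (2*n₁+1) * Nv n₂) := by
    rw [eq_div_iff (mul_ne_zero hN1 hN2)]
    exact cst_mul_Nv hβ n₁ n₂
  rw [hc']
  have ha' : aa β ≠ 0 := ha.ne'
  field_simp
  push_cast
  ring

/-! ### The ground state -/

lemma uHalf_zero_sq {β : ℝ} (hβ : 0 < β) (p : ℝ × ℝ) :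
    (uHalf β 0 0 p)^2
      = (β / π) * p.1^2 * Real.exp (-(Real.sqrt β / 2) * (p.1^2 + p.2^2)) := by
  obtain ⟨x, y⟩ := p
  rw [uHalf_eq 0 0 x y]
  have hc := cst_pos hβ 0 0
  have hsq : (Real.sqrt (cst β 0 0) * wf β (2*0+1) x * wf β 0 y)^2
      = cst β 0 0 * (wf β 1 x)^2 * (wf β 0 y)^2 := by
    rw [mul_pow, mul_pow, Real.sq_sqrt hc.le]
  rw [hsq, wf_sq hβ, wf_sq hβ]
  have hcst : cst β 0 0 = Real.sqrt β / (2*π) := by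
    unfold cst
    norm_num
    ring
  rw [hcst]
  simp only [Hp_one, Hp_zero, eval_pow, eval_mul, eval_ofNat, eval_X, eval_one, one_pow]
  have haa2 : (aa β)^2 = Real.sqrt β / 2 := aa_sq hβ
  have hββ : Real.sqrt β * Real.sqrt β = β := Real.mul_self_sqrt hβ.le
  have hexp2 : Real.exp (-((aa β * x)^2)) * Real.exp (-((aa β * y)^2))
      = Real.exp (-(Real.sqrt β/2)*(x^2+y^2)) := by
    rw [← Real.exp_add]
    congr 1
    rw [mul_pow, mul_pow, haa2]
    ring
  have hπ : π ≠ 0 := Real.pi_pos.ne'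
  calc Real.sqrt β/(2*π) * ((2*(aa β*x))^2 * Real.exp (-((aa β*x)^2)))
        * (1 * Real.exp (-((aa β*y)^2)))
      = (Real.sqrt β * (aa β)^2) * x^2
        * (Real.exp (-((aa β*x)^2)) * Real.exp (-((aa β*y)^2))) * (2/π) := by ring
    _ = (β / π) * x^2 * Real.exp (-(Real.sqrt β/2)*(x^2+y^2)) := by
        rw [haa2, hexp2]
        field_simp
        rw [sq_sqrt hβ.le]; ring

end CramerRaoAux


open CramerRaoAux Polynomial Filter Set in
/-- **Example 1: Cramér–Rao product and its minimum.** -/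
theorem halfplane_cramer_rao_product
    (β : ℝ) (hβ : 0 < β) (n₁ n₂ : ℕ) :
    fisherHalf β n₁ n₂ * varHalf β n₁ n₂ = 4 * (2*(n₁:ℝ) + n₂ + 2)^2
    ∧ 16 ≤ fisherHalf β n₁ n₂ * varHalf β n₁ n₂
    ∧ (fisherHalf β n₁ n₂ * varHalf β n₁ n₂ = 16 ↔ n₁ = 0 ∧ n₂ = 0)
    ∧ (∀ p : ℝ × ℝ, (uHalf β 0 0 p)^2
        = (β / π) * p.1^2 * Real.exp (-(Real.sqrt β / 2) * (p.1^2 + p.2^2))) := by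
  have ha := aa_pos hβ
  have hfv : fisherHalf β n₁ n₂ * varHalf β n₁ n₂ = 4 * (2*(n₁:ℝ) + n₂ + 2)^2 := by
    rw [fisher_eq hβ, var_eq hβ]
    have h0 : (aa β)^2 ≠ 0 := by positivity
    field_simp
  have hk : (2:ℝ) ≤ 2*(n₁:ℝ) + n₂ + 2 := by
    have h1 : (0:ℝ) ≤ n₁ := Nat.cast_nonneg _
    have h2 : (0:ℝ) ≤ n₂ := Nat.cast_nonneg _
    linarith
  refine ⟨hfv, ?_, ?_, fun p => uHalf_zero_sq hβ p⟩
  · rw [hfv]; nlinarith [hk]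
  · rw [hfv]
    constructor
    · intro h
      have h2 : (2*(n₁:ℝ) + n₂ + 2)^2 = 4 := by linarith
      have h3 : 2*(n₁:ℝ) + n₂ + 2 = 2 := by nlinarith [hk]
      have h4 : 2*n₁ + n₂ = 0 := by
        exact_mod_cast (by push_cast; linarith : ((2*n₁ + n₂ : ℕ):ℝ) = ((0:ℕ):ℝ))
      exact ⟨by omega, by omega⟩
    · rintro ⟨rfl, rfl⟩
      norm_num
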